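/- Fix 0 < t < 1, integers n ≥ h ≥ 0, and let q_w = C(n,w) t^w (1−t)^{n−w} be the binomial distribution on w ∈ {0,…,n}. Then (1/n!) Σ_{σ∈S_n} Σ_{w ≥ d(0ⁿ, σ(1^h 0^{n−h}))} q_w = t^h, where d is the distance d(x,y) = min{ j : x_i = y_i for all i > j } and σ(x) permutes the bits of x. -/

import Mathlib

open scoped BigOperators

open Finset

/-- `bitDist x y` is the smallest `j ≥ 0` such that the bits of `x` and `y`
agree at all (0-based) positions `i` with `i ≥ j` (1-based positions `i > j`). -/
noncomputable def bitDist {n : ℕ} (x y : Fin n → Bool) : ℕ :=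
  sInf { j : ℕ | ∀ i : Fin n, j ≤ (i : ℕ) → x i = y i }

section Aux

variable {n h : ℕ}

private noncomputable def qmap (hhn : h ≤ n) (σ : Equiv.Perm (Fin n)) : Fin h ↪ Fin n :=
  (Fin.castLEEmb hhn).trans σ.toEmbedding

private lemma qmap_apply (hhn : h ≤ n) (σ : Equiv.Perm (Fin n)) (k : Fin h) :
    qmap hhn σ k = σ (Fin.castLE hhn k) := rfl

private lemma qmap_surj (hhn : h ≤ n) (f : Fin h ↪ Fin n) : ∃ σ, qmap hhn σ = f := by
  classical
  have hinj : Function.Injective (Fin.castLE hhn) := Fin.castLE_injective hhn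
  let e : {x : Fin n // x ∈ Set.range (Fin.castLE hhn)} ≃ {x : Fin n // x ∈ Set.range f} :=
    (Equiv.ofInjective _ hinj).symm.trans (Equiv.ofInjective f f.injective)
  refine ⟨e.extendSubtype, ?_⟩
  ext k
  rw [qmap_apply]
  have hx : (Fin.castLE hhn k) ∈ Set.range (Fin.castLE hhn) := ⟨k, rfl⟩
  rw [Equiv.extendSubtype_apply_of_mem e _ hx]
  simp only [e, Equiv.trans_apply]
  rw [show (⟨Fin.castLE hhn k, hx⟩ : {x : Fin n // x ∈ Set.range (Fin.castLE hhn)}) =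
    ⟨Fin.castLE hhn k, Set.mem_range_self k⟩ from rfl, Equiv.ofInjective_symm_apply hinj k]
  rfl

private lemma fiber_card (hhn : h ≤ n) (f : Fin h ↪ Fin n) :
    (univ.filter fun σ : Equiv.Perm (Fin n) => qmap hhn σ = f).card =
      (univ.filter fun σ : Equiv.Perm (Fin n) => qmap hhn σ = qmap hhn 1).card := by
  classical
  obtain ⟨σf, hσf⟩ := qmap_surj hhn f
  refine Finset.card_nbij' (fun σ => σf⁻¹ * σ) (fun π => σf * π) ?_ ?_ ?_ ?_
  · intro σ hσ
    simp only [mem_coe, mem_filter, mem_univ, true_and] at hσ ⊢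
    ext k
    have h1 : σ (Fin.castLE hhn k) = f k := by rw [← hσ]; rfl
    have h2 : σf (Fin.castLE hhn k) = f k := by rw [← hσf]; rfl
    simp [qmap_apply, Equiv.Perm.mul_apply, h1, ← h2]
  · intro π hπ
    simp only [mem_coe, mem_filter, mem_univ, true_and] at hπ ⊢
    ext k
    have h1 : π (Fin.castLE hhn k) = Fin.castLE hhn k := by
      have := congrFun (congrArg (fun (g : Fin h ↪ Fin n) => (g : Fin h → Fin n)) hπ) k
      simpa [qmap_apply] using this
    have h2 : σf (Fin.castLE hhn k) = f k := by rw [← hσf]; rfl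
    simp [qmap_apply, Equiv.Perm.mul_apply, h1, h2]
  · intro σ _; group
  · intro π _; group

private lemma sum_qmap (hhn : h ≤ n) (g : (Fin h ↪ Fin n) → ℝ) :
    ∑ σ : Equiv.Perm (Fin n), g (qmap hhn σ) =
      ((univ.filter fun σ : Equiv.Perm (Fin n) => qmap hhn σ = qmap hhn 1).card : ℝ) *
        ∑ f : Fin h ↪ Fin n, g f := by
  classical
  rw [← Finset.sum_fiberwise univ (qmap hhn) (fun σ => g (qmap hhn σ)), Finset.mul_sum]
  refine Finset.sum_congr rfl fun f _ => ?_
  have hcon : ∀ σ ∈ univ.filter fun σ => qmap hhn σ = f, g (qmap hhn σ) = g f := by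
    intro σ hσ
    rw [(Finset.mem_filter.mp hσ).2]
  rw [Finset.sum_congr rfl hcon, Finset.sum_const, fiber_card hhn f, nsmul_eq_mul]

private lemma card_count (hhn : h ≤ n) :
    ((univ.filter fun σ : Equiv.Perm (Fin n) => qmap hhn σ = qmap hhn 1).card)
      * n.descFactorial h = n.factorial := by
  classical
  have := Finset.card_eq_sum_card_fiberwise
    (f := qmap hhn) (s := (univ : Finset (Equiv.Perm (Fin n)))) (t := univ)
    (fun x _ => mem_univ _)
  rw [Finset.sum_congr rfl (fun f _ => fiber_card hhn f), Finset.sum_const,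
    smul_eq_mul, card_univ, card_univ, Fintype.card_embedding_eq] at this
  simp only [Fintype.card_fin, Fintype.card_perm] at this
  rw [mul_comm] at this
  exact this.symm

private lemma card_emb {w : ℕ} (hw : w ≤ n) :
    (univ.filter fun f : Fin h ↪ Fin n => ∀ k, ((f k : Fin n) : ℕ) < w).card =
      w.descFactorial h := by
  classical
  have : (univ.filter fun f : Fin h ↪ Fin n => ∀ k, ((f k : Fin n) : ℕ) < w).card =
      (univ : Finset (Fin h ↪ Fin w)).card := by
    refine Finset.card_bij' (fun f hf => ?_) (fun g _ => g.trans (Fin.castLEEmb hw)) ?_ ?_ ?_ ?_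
    · refine ⟨fun k => ⟨(f k : Fin n), (Finset.mem_filter.mp hf).2 k⟩, ?_⟩
      intro a b hab
      simp only [Fin.mk.injEq] at hab
      exact f.injective (Fin.ext hab)
    · intro f hf; exact mem_univ _
    · intro g _
      simp only [mem_filter, mem_univ, true_and]
      intro k
      exact (g k).isLt
    · intro f hf; ext k; rfl
    · intro g _; ext k; rfl
  rw [this, card_univ, Fintype.card_embedding_eq]
  simp

private lemma final_sum (hhn : h ≤ n) (t : ℝ) :
    ∑ w ∈ range (n + 1),
        (w.descFactorial h : ℝ) / (n.descFactorial h : ℝ) *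
          ((n.choose w : ℝ) * t ^ w * (1 - t) ^ (n - w)) = t ^ h := by
  have hd0 : (n.descFactorial h : ℝ) ≠ 0 := by
    have := Nat.choose_pos hhn
    rw [Nat.descFactorial_eq_factorial_mul_choose]
    positivity
  have hsub : ∑ w ∈ Finset.Ico h (n + 1),
      (w.descFactorial h : ℝ) / (n.descFactorial h : ℝ) *
        ((n.choose w : ℝ) * t ^ w * (1 - t) ^ (n - w)) =
      ∑ w ∈ range (n + 1),
      (w.descFactorial h : ℝ) / (n.descFactorial h : ℝ) *
        ((n.choose w : ℝ) * t ^ w * (1 - t) ^ (n - w)) := by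
    refine Finset.sum_subset ?_ ?_
    · intro w hw
      simp only [Finset.mem_Ico] at hw
      exact Finset.mem_range.mpr hw.2
    · intro w hw hw'
      simp only [Finset.mem_range, Finset.mem_Ico, not_and, not_le] at hw hw'
      have hlt : w < h := by
        by_contra hc
        push_neg at hc
        exact absurd (hw' hc) (by omega)
      have : w.descFactorial h = 0 := Nat.descFactorial_eq_zero_iff_lt.mpr hlt
      rw [this]
      simp
  rw [← hsub, Finset.sum_Ico_eq_sum_range]
  have hterm : ∀ k ∈ range (n + 1 - h),
      ((h + k).descFactorial h : ℝ) / (n.descFactorial h : ℝ) *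
        ((n.choose (h + k) : ℝ) * t ^ (h + k) * (1 - t) ^ (n - (h + k))) =
      t ^ h * (t ^ k * (1 - t) ^ (n - h - k) * ((n - h).choose k : ℝ)) := by
    intro k hk
    have hkn : h + k ≤ n := by
      simp only [Finset.mem_range] at hk; omega
    have key : (h + k).descFactorial h * n.choose (h + k) =
        n.descFactorial h * (n - h).choose k := by
      rw [Nat.descFactorial_eq_factorial_mul_choose, Nat.descFactorial_eq_factorial_mul_choose,
        mul_assoc, mul_assoc]
      congr 1
      rw [mul_comm ((h + k).choose h) _, Nat.choose_mul (n := n) (Nat.le_add_right h k),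
        Nat.add_sub_cancel_left]
    have keyR : ((h + k).descFactorial h : ℝ) * (n.choose (h + k) : ℝ) =
        (n.descFactorial h : ℝ) * ((n - h).choose k : ℝ) := by exact_mod_cast key
    rw [show n - (h + k) = n - h - k by omega, pow_add]
    field_simp
    linear_combination (t ^ h * t ^ k * (1 - t) ^ (n - h - k)) * keyR
  rw [Finset.sum_congr rfl hterm, ← Finset.mul_sum,
    show n + 1 - h = (n - h) + 1 by omega]
  have hbin := add_pow t (1 - t) (n - h)
  simp only [add_sub_cancel, one_pow] at hbin
  rw [← hbin]
  ring_nf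

private lemma bitDist_le_iff (hhn : h ≤ n) (σ : Equiv.Perm (Fin n)) (w : ℕ) :
    bitDist (fun _ => false) (fun i : Fin n => decide (((σ⁻¹ i : Fin n) : ℕ) < h)) ≤ w ↔
      ∀ k : Fin h, ((qmap hhn σ k : Fin n) : ℕ) < w := by
  classical
  rw [bitDist]
  set S : Set ℕ := {j : ℕ | ∀ i : Fin n, j ≤ (i : ℕ) →
      (fun _ : Fin n => false) i = decide (((σ⁻¹ i : Fin n) : ℕ) < h)} with hS
  have hSiff : ∀ j, j ∈ S ↔ ∀ i : Fin n, j ≤ (i : ℕ) → ¬ (((σ⁻¹ i : Fin n) : ℕ) < h) := by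
    intro j
    constructor
    · intro hj i hi hP
      have := (hj i hi).symm
      simp only [decide_eq_false_iff_not] at this
      · exact this hP
    · intro hj i hi
      have := hj i hi
      simpa using this
  have hnS : n ∈ S := by
    intro i hi
    exact absurd hi (by omega)
  constructor
  · intro hle k
    have hmem : sInf S ∈ S := Nat.sInf_mem ⟨n, hnS⟩
    by_contra hkw
    push_neg at hkw
    have hni := (hSiff _).mp hmem (σ (Fin.castLE hhn k)) (le_trans hle hkw)
    apply hni
    rw [Equiv.Perm.inv_def, Equiv.symm_apply_apply]
    exact k.isLt
  · intro hk
    apply Nat.sInf_le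
    rw [hSiff]
    intro i hi hP
    have hcast : Fin.castLE hhn ⟨((σ⁻¹ : Equiv.Perm (Fin n)) i : ℕ), hP⟩ = σ⁻¹ i :=
      Fin.ext rfl
    have := hk ⟨((σ⁻¹ : Equiv.Perm (Fin n)) i : ℕ), hP⟩
    rw [qmap_apply, hcast, Equiv.Perm.inv_def, Equiv.apply_symm_apply] at this
    omega

end Aux

/-- Averaging the ultrametric Gram matrix entries over all permutations with
binomial weights `q_w = C(n,w) t^w (1−t)^{n−w}` reproduces `t^h`. -/
theorem perm_binomial_identity (n h : ℕ) (hhn : h ≤ n)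
    (t : ℝ) (ht0 : 0 < t) (ht1 : t < 1) :
    (n.factorial : ℝ)⁻¹ *
      ∑ σ : Equiv.Perm (Fin n),
        ∑ w ∈ Finset.Icc
            (bitDist (fun _ => false) (fun i => decide (((σ⁻¹ i : Fin n) : ℕ) < h))) n,
          (n.choose w : ℝ) * t ^ w * (1 - t) ^ (n - w)
      = t ^ h := by
  classical
  set Q : ℕ → ℝ := fun w => (n.choose w : ℝ) * t ^ w * (1 - t) ^ (n - w) with hQ
  set c := (univ.filter fun σ : Equiv.Perm (Fin n) => qmap hhn σ = qmap hhn 1).card with hc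
  have stepA : ∀ σ : Equiv.Perm (Fin n),
      (∑ w ∈ Finset.Icc
          (bitDist (fun _ => false) (fun i => decide (((σ⁻¹ i : Fin n) : ℕ) < h))) n, Q w) =
      ∑ w ∈ range (n + 1),
        if (∀ k : Fin h, ((qmap hhn σ k : Fin n) : ℕ) < w) then Q w else 0 := by
    intro σ
    have hset : Finset.Icc
        (bitDist (fun _ => false) (fun i => decide (((σ⁻¹ i : Fin n) : ℕ) < h))) n =
        (range (n + 1)).filter
          (fun w => ∀ k : Fin h, ((qmap hhn σ k : Fin n) : ℕ) < w) := by
      ext w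
      simp only [Finset.mem_Icc, Finset.mem_filter, Finset.mem_range, Nat.lt_succ_iff]
      rw [← bitDist_le_iff hhn σ w]
      tauto
    rw [hset, Finset.sum_filter]
  rw [Finset.sum_congr rfl (fun σ _ => stepA σ), Finset.sum_comm]
  have stepB : ∀ w ∈ range (n + 1),
      (∑ σ : Equiv.Perm (Fin n),
        if (∀ k : Fin h, ((qmap hhn σ k : Fin n) : ℕ) < w) then Q w else 0)
        = (c : ℝ) * ((w.descFactorial h : ℝ) * Q w) := by
    intro w hw
    rw [sum_qmap hhn (fun f => if (∀ k : Fin h, ((f k : Fin n) : ℕ) < w) then Q w else 0), ← hc]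
    congr 1
    rw [← Finset.sum_filter, Finset.sum_const,
      card_emb (Nat.lt_succ_iff.mp (Finset.mem_range.mp hw)), nsmul_eq_mul]
  rw [Finset.sum_congr rfl stepB, Finset.mul_sum]
  have hd0 : (n.descFactorial h : ℝ) ≠ 0 := by
    have := Nat.choose_pos hhn
    rw [Nat.descFactorial_eq_factorial_mul_choose]
    positivity
  have hfact : (n.factorial : ℝ) ≠ 0 := by
    exact_mod_cast Nat.factorial_ne_zero n
  have hcd : (c : ℝ) * (n.descFactorial h : ℝ) = (n.factorial : ℝ) := by
    exact_mod_cast card_count hhn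
  have hterm : ∀ w ∈ range (n + 1),
      (n.factorial : ℝ)⁻¹ * ((c : ℝ) * ((w.descFactorial h : ℝ) * Q w)) =
        (w.descFactorial h : ℝ) / (n.descFactorial h : ℝ) * Q w := by
    intro w _
    field_simp
    linear_combination ((w.descFactorial h : ℝ) * Q w) * hcd
  rw [Finset.sum_congr rfl hterm]
  exact final_sum hhn t
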